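/- (Lemma 3.1(ii), d = 2.) Let Ω ⊆ ℝ² be a bounded open set with 0 ∉ closure(Ω), r > 0, T the inversion in the sphere of radius r centered at the origin, σ the 1-dimensional Hausdorff measure restricted to ∂Ω, and σ* the 1-dimensional Hausdorff measure restricted to ∂Ω* := T(∂Ω). Let ν : ℝ² → ℝ² be any map, and define ν*(T x) := R_x ν(x) on ∂Ω*, where R_x = I − 2(x/|x|)(x/|x|)ᵗ. Let φ : ℝ² → ℝ be bounded Borel measurable with σ(∂Ω) < ∞ and define φ*(T y) := φ(y)|y|²/r². Then for every x ∈ ∂Ω such that y ↦ ⟨ν(x), ∇Γ(x−y)⟩φ(y) is σ-integrable, ∫_{∂Ω*} ⟨ν*(Tx), ∇Γ(Tx − z)⟩ φ*(z) dσ*(z) = (|x|²/r²) ∫_{∂Ω} ⟨ν(x), ∇Γ(x − y)⟩ φ(y) dσ(y) − (∫_{∂Ω} φ dσ) · ⟨x, ν(x)⟩/(2π r²), where ∇Γ(z) = z/(2π|z|²). -/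

import Mathlib

open MeasureTheory
open scoped Real RealInnerProductSpace ENNReal NNReal

noncomputable section
namespace NPInv

variable {E : Type*} [NormedAddCommGroup E] [InnerProductSpace ℝ E]

/-- inversion in the sphere of radius `r` centered at the origin -/
def inv0 (r : ℝ) (y : E) : E := (r ^ 2 / ‖y‖ ^ 2) • y

lemma norm_inv0 {r : ℝ} (hr : 0 < r) {y : E} (hy : y ≠ 0) :
    ‖inv0 r y‖ = r ^ 2 / ‖y‖ := by
  have h : (0:ℝ) < ‖y‖ := norm_pos_iff.mpr hy
  rw [inv0, norm_smul, Real.norm_eq_abs, abs_of_pos (by positivity)]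
  field_simp

lemma inv0_inv0 {r : ℝ} (hr : 0 < r) {y : E} (hy : y ≠ 0) :
    inv0 r (inv0 r y) = y := by
  have h : (0:ℝ) < ‖y‖ := norm_pos_iff.mpr hy
  rw [inv0, norm_inv0 hr hy, inv0, smul_smul]
  have : r ^ 2 / (r ^ 2 / ‖y‖) ^ 2 * (r ^ 2 / ‖y‖ ^ 2) = 1 := by
    have h : (0:ℝ) < ‖y‖ := norm_pos_iff.mpr hy
    field_simp
  rw [this, one_smul]

lemma inv0_ne_zero {r : ℝ} (hr : 0 < r) {y : E} (hy : y ≠ 0) : inv0 r y ≠ 0 := by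
  have h : (0:ℝ) < ‖y‖ := norm_pos_iff.mpr hy
  simp only [inv0, ne_eq, smul_eq_zero, not_or]
  exact ⟨by positivity, hy⟩

lemma dist_inv0 {r : ℝ} (hr : 0 < r) {x y : E} (hx : x ≠ 0) (hy : y ≠ 0) :
    ‖inv0 r x - inv0 r y‖ = r ^ 2 * ‖x - y‖ / (‖x‖ * ‖y‖) := by
  have hx' : (0:ℝ) < ‖x‖ := norm_pos_iff.mpr hx
  have hy' : (0:ℝ) < ‖y‖ := norm_pos_iff.mpr hy
  have hsq : ‖inv0 r x - inv0 r y‖ ^ 2 = (r ^ 2 * ‖x - y‖ / (‖x‖ * ‖y‖)) ^ 2 := by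
    rw [norm_sub_sq_real, norm_inv0 hr hx, norm_inv0 hr hy, inv0, inv0,
      real_inner_smul_left, real_inner_smul_right]
    have h2 : ‖x - y‖ ^ 2 = ‖x‖ ^ 2 - 2 * ⟪x, y⟫ + ‖y‖ ^ 2 := norm_sub_sq_real x y
    have h3 : (r ^ 2 * ‖x - y‖ / (‖x‖ * ‖y‖)) ^ 2
        = (r ^ 2) ^ 2 * (‖x‖ ^ 2 - 2 * ⟪x, y⟫ + ‖y‖ ^ 2) / (‖x‖ ^ 2 * ‖y‖ ^ 2) := by
      rw [div_pow, mul_pow, h2]; ring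
    rw [h3]
    field_simp
    ring
  have h1 : (0:ℝ) ≤ r ^ 2 * ‖x - y‖ / (‖x‖ * ‖y‖) := by positivity
  nlinarith [norm_nonneg (inv0 r x - inv0 r y)]

lemma lipschitzOnWith_inv0 {r a : ℝ} (hr : 0 < r) (ha : 0 < a) {A : Set E}
    (hA : ∀ y ∈ A, a ≤ ‖y‖) :
    LipschitzOnWith (r ^ 2 / a ^ 2).toNNReal (inv0 r) A := by
  apply LipschitzOnWith.of_dist_le_mul
  intro u hu v hv
  have hu' : a ≤ ‖u‖ := hA u hu
  have hv' : a ≤ ‖v‖ := hA v hv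
  have hu0 : u ≠ 0 := fun h => by simp [h] at hu'; linarith
  have hv0 : v ≠ 0 := fun h => by simp [h] at hv'; linarith
  rw [dist_eq_norm, dist_eq_norm, dist_inv0 hr hu0 hv0,
    Real.coe_toNNReal _ (by positivity)]
  rw [div_le_iff₀ (mul_pos (norm_pos_iff.mpr hu0) (norm_pos_iff.mpr hv0))]
  have h1 : a ^ 2 ≤ ‖u‖ * ‖v‖ := by nlinarith
  have h2 : r ^ 2 / a ^ 2 * a ^ 2 = r ^ 2 := div_mul_cancel₀ _ (by positivity)
  nlinarith [mul_le_mul_of_nonneg_left h1 (show (0:ℝ) ≤ r ^ 2 / a ^ 2 * ‖u - v‖ by positivity),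
    norm_nonneg (u - v)]

lemma image_inv0_eq_preimage {r : ℝ} (hr : 0 < r) {A : Set E} (hA : ∀ y ∈ A, y ≠ 0) :
    inv0 r '' A = inv0 r ⁻¹' A := by
  ext z
  constructor
  · rintro ⟨y, hy, rfl⟩
    simpa [Set.mem_preimage, inv0_inv0 hr (hA y hy)] using hy
  · intro hz
    have hz0 : z ≠ 0 := by
      intro h
      have : inv0 r z ∈ A := hz
      rw [h] at this
      exact hA _ this (by simp [inv0])
    exact ⟨inv0 r z, hz, inv0_inv0 hr hz0⟩

lemma inv0_injOn {r : ℝ} (hr : 0 < r) :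
    Set.InjOn (inv0 r) {y : E | y ≠ 0} := by
  intro u hu v hv h
  have := congrArg (inv0 r) h
  rwa [inv0_inv0 hr hu, inv0_inv0 hr hv] at this

/-- squeeze -/
lemma ennreal_le_of_forall {F G : ℝ≥0∞} (hG : G ≠ ⊤)
    (h : ∀ ε : ℝ, 0 < ε → F ≤ ENNReal.ofReal ((1 + ε) ^ 2) * G) : F ≤ G := by
  refine ENNReal.le_of_forall_pos_le_add fun η hη hG' => ?_
  set y := G.toReal with hy
  have hy0 : 0 ≤ y := ENNReal.toReal_nonneg
  set δ : ℝ := min 1 ((η : ℝ) / (3 * (y + 1))) with hδdef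
  have hδpos : 0 < δ := by
    apply lt_min one_pos
    positivity
  have hδ1 : δ ≤ 1 := min_le_left _ _
  have key : (1 + δ) ^ 2 ≤ 1 + 3 * δ := by nlinarith
  calc F ≤ ENNReal.ofReal ((1 + δ) ^ 2) * G := h δ hδpos
    _ ≤ ENNReal.ofReal (1 + 3 * δ) * G := by
        exact mul_le_mul_left (ENNReal.ofReal_le_ofReal key) G
    _ = (1 + ENNReal.ofReal (3 * δ)) * G := by
        rw [← ENNReal.ofReal_one, ← ENNReal.ofReal_add (by norm_num) (by positivity)]
    _ = G + ENNReal.ofReal (3 * δ) * G := by ring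
    _ ≤ G + η := by
        gcongr
        have hGy : G = ENNReal.ofReal y := (ENNReal.ofReal_toReal hG).symm
        rw [hGy, ← ENNReal.ofReal_mul (by positivity)]
        have h3 : 3 * δ * y ≤ (η : ℝ) := by
          have hδle : δ ≤ (η : ℝ) / (3 * (y + 1)) := min_le_right _ _
          have : 3 * δ * y ≤ 3 * ((η : ℝ) / (3 * (y + 1))) * y := by nlinarith
          calc 3 * δ * y ≤ 3 * ((η : ℝ) / (3 * (y + 1))) * y := this
            _ = (η : ℝ) * (y / (y + 1)) := by field_simp
            _ ≤ (η : ℝ) * 1 := by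
                gcongr
                rw [div_le_one (by linarith)]; linarith
            _ = η := mul_one _
        calc ENNReal.ofReal (3 * δ * y) ≤ ENNReal.ofReal (η : ℝ) := ENNReal.ofReal_le_ofReal h3
          _ = (η : ℝ≥0∞) := ENNReal.ofReal_coe_nnreal

lemma ennreal_squeeze {F G : ℝ≥0∞} (hG : G ≠ ⊤)
    (h1 : ∀ ε : ℝ, 0 < ε → F ≤ ENNReal.ofReal ((1 + ε) ^ 2) * G)
    (h2 : ∀ ε : ℝ, 0 < ε → G ≤ ENNReal.ofReal ((1 + ε) ^ 2) * F) : F = G := by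
  have hF : F ≠ ⊤ := by
    have := h1 1 one_pos
    exact ne_top_of_le_ne_top (by finiteness) this
  exact le_antisymm (ennreal_le_of_forall hG h1) (ennreal_le_of_forall hF h2)

lemma pointwise {r : ℝ} (hr : 0 < r) (x y ν : E) (hx : x ≠ 0) (hy : y ≠ 0)
    (hxy : x ≠ y) (c : ℝ) :
    ⟪ν - (2 * ⟪x, ν⟫ / ‖x‖ ^ 2) • x,
        (2 * π * ‖inv0 r x - inv0 r y‖ ^ 2)⁻¹ • (inv0 r x - inv0 r y)⟫
      * (c * ‖y‖ ^ 2 / r ^ 2) * (r ^ 2 / ‖y‖ ^ 2)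
    = ‖x‖ ^ 2 / r ^ 2 * (⟪ν, (2 * π * ‖x - y‖ ^ 2)⁻¹ • (x - y)⟫ * c)
      - c * (⟪x, ν⟫ / (2 * π * r ^ 2)) := by
  have hnx : (0:ℝ) < ‖x‖ := norm_pos_iff.mpr hx
  have hny : (0:ℝ) < ‖y‖ := norm_pos_iff.mpr hy
  have hxy' : (0:ℝ) < ‖x - y‖ := norm_pos_iff.mpr (sub_ne_zero.mpr hxy)
  have hπ : (0:ℝ) < π := Real.pi_pos
  have hD : ‖inv0 r x - inv0 r y‖ ^ 2 = (r ^ 2) ^ 2 * ‖x - y‖ ^ 2 / (‖x‖ ^ 2 * ‖y‖ ^ 2) := by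
    rw [dist_inv0 hr hx hy]
    field_simp
  rw [hD]
  simp only [inv0, inner_sub_left, inner_sub_right, real_inner_smul_left,
    real_inner_smul_right, real_inner_self_eq_norm_sq]
  have hsub : ‖x - y‖ ^ 2 = ‖x‖ ^ 2 - 2 * ⟪x, y⟫ + ‖y‖ ^ 2 := norm_sub_sq_real x y
  rw [real_inner_comm ν x, hsub]
  have hkey : ‖x‖ ^ 2 - 2 * ⟪x, y⟫ + ‖y‖ ^ 2 ≠ 0 := by
    rw [← hsub]; positivity
  field_simp
  ring

section Meas
variable [MeasurableSpace E] [BorelSpace E]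

lemma measurable_inv0' (r : ℝ) : Measurable (inv0 r : E → E) :=
  (measurable_const.div (measurable_norm.pow_const 2)).smul measurable_id

lemma shell_ub {r a : ℝ} (hr : 0 < r) (ha : 0 < a) {B : Set E}
    (hlb : ∀ y ∈ B, a ≤ ‖y‖) :
    μH[1] (inv0 r '' B) ≤ ENNReal.ofReal (r ^ 2 / a ^ 2) * μH[1] B := by
  have h := (lipschitzOnWith_inv0 hr ha hlb).hausdorffMeasure_image_le
    (zero_le_one : (0:ℝ) ≤ 1)
  simpa [ENNReal.ofReal, ENNReal.rpow_one] using h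

lemma shell_lb {r a b : ℝ} (hr : 0 < r) (ha : 0 < a) (hb : 0 < b) {B : Set E}
    (hlb : ∀ y ∈ B, a ≤ ‖y‖) (hub : ∀ y ∈ B, ‖y‖ ≤ b) :
    μH[1] B ≤ ENNReal.ofReal (b ^ 2 / r ^ 2) * μH[1] (inv0 r '' B) := by
  have hB0 : ∀ y ∈ B, y ≠ 0 := by
    intro y hy h0
    have := hlb y hy; rw [h0, norm_zero] at this; linarith
  have him : inv0 r '' (inv0 r '' B) = B := by
    rw [Set.image_image]
    have : Set.EqOn (fun y => inv0 r (inv0 r y)) id B := fun y hy => inv0_inv0 hr (hB0 y hy)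
    rw [Set.image_congr this, Set.image_id]
  have hlb' : ∀ z ∈ inv0 r '' B, r ^ 2 / b ≤ ‖z‖ := by
    rintro z ⟨y, hy, rfl⟩
    rw [norm_inv0 hr (hB0 y hy)]
    have hy1 : 0 < ‖y‖ := norm_pos_iff.mpr (hB0 y hy)
    exact div_le_div_of_nonneg_left (by positivity) hy1 (hub y hy)
  have h := shell_ub hr (by positivity : 0 < r ^ 2 / b) hlb'
  rw [him] at h
  have : r ^ 2 / (r ^ 2 / b) ^ 2 = b ^ 2 / r ^ 2 := by
    field_simp
  rwa [this] at h

lemma key {r c M : ℝ} (hr : 0 < r) (hc : 0 < c) {A : Set E} (hAm : MeasurableSet A)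
    (hfinA : μH[1] A ≠ ⊤) (hlb : ∀ y ∈ A, c ≤ ‖y‖) (hub : ∀ y ∈ A, ‖y‖ ≤ M) :
    μH[1] (inv0 r '' A) = ∫⁻ y in A, ENNReal.ofReal (r ^ 2 / ‖y‖ ^ 2) ∂μH[1] := by
  have hA0 : ∀ y ∈ A, y ≠ 0 := by
    intro y hy h0; have := hlb y hy; rw [h0, norm_zero] at this; linarith
  set G := ∫⁻ y in A, ENNReal.ofReal (r ^ 2 / ‖y‖ ^ 2) ∂μH[1] with hGdef
  have hwmeas : Measurable fun y : E => ENNReal.ofReal (r ^ 2 / ‖y‖ ^ 2) :=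
    (measurable_const.div ((measurable_norm).pow_const 2)).ennreal_ofReal
  have hGle : G ≤ ENNReal.ofReal (r ^ 2 / c ^ 2) * μH[1] A := by
    calc G ≤ ∫⁻ _ in A, ENNReal.ofReal (r ^ 2 / c ^ 2) ∂μH[1] := by
          apply setLIntegral_mono measurable_const
          intro y hy
          apply ENNReal.ofReal_le_ofReal
          have h1 : c ≤ ‖y‖ := hlb y hy
          exact div_le_div_of_nonneg_left (by positivity) (by positivity) (by nlinarith)
      _ = ENNReal.ofReal (r ^ 2 / c ^ 2) * μH[1] A := setLIntegral_const _ _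
  have hGfin : G ≠ ⊤ := by
    refine ne_top_of_le_ne_top ?_ hGle
    exact ENNReal.mul_ne_top ENNReal.ofReal_ne_top hfinA
  -- main two-sided estimate for each ε
  have main : ∀ ε : ℝ, 0 < ε →
      μH[1] (inv0 r '' A) ≤ ENNReal.ofReal ((1 + ε) ^ 2) * G ∧
      G ≤ ENNReal.ofReal ((1 + ε) ^ 2) * μH[1] (inv0 r '' A) := by
    intro ε hε
    obtain ⟨N, hN⟩ : ∃ N : ℕ, M / c < (1 + ε) ^ N :=
      pow_unbounded_of_one_lt _ (by linarith)
    have hMN : M < c * (1 + ε) ^ N := by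
      rw [div_lt_iff₀ hc] at hN; linarith [hN]
    set f : ℕ → Set E := fun k =>
      A ∩ (fun y : E => ‖y‖) ⁻¹' Set.Ico (c * (1 + ε) ^ k) (c * (1 + ε) ^ (k + 1)) with hfdef
    have hfm : ∀ k, MeasurableSet (f k) :=
      fun k => hAm.inter (measurableSet_Ico.preimage measurable_norm)
    have hfsub : ∀ k, f k ⊆ A := fun k => Set.inter_subset_left
    have hflb : ∀ k, ∀ y ∈ f k, c * (1 + ε) ^ k ≤ ‖y‖ := fun k y hy => hy.2.1
    have hfub : ∀ k, ∀ y ∈ f k, ‖y‖ ≤ c * (1 + ε) ^ (k + 1) := fun k y hy => le_of_lt hy.2.2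
    have hf0 : ∀ k, ∀ y ∈ f k, y ≠ 0 := fun k y hy => hA0 y (hfsub k hy)
    have hcover : A = ⋃ k ∈ Finset.range N, f k := by
      apply Set.Subset.antisymm
      · intro y hy
        have h1 : c ≤ ‖y‖ := hlb y hy
        have h2 : ‖y‖ < c * (1 + ε) ^ N := lt_of_le_of_lt (hub y hy) hMN
        have hex : ∃ k : ℕ, ‖y‖ < c * (1 + ε) ^ (k + 1) := by
          refine ⟨N, lt_of_lt_of_le h2 ?_⟩
          apply mul_le_mul_of_nonneg_left _ (le_of_lt hc)
          exact pow_le_pow_right₀ (by linarith) (Nat.le_succ N)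
        classical
        set k := Nat.find hex with hkdef
        have hk1 : ‖y‖ < c * (1 + ε) ^ (k + 1) := Nat.find_spec hex
        have hk2 : c * (1 + ε) ^ k ≤ ‖y‖ := by
          rcases Nat.eq_zero_or_pos k with h | h
          · rw [h]; simpa using h1
          · have := Nat.find_min hex (Nat.sub_lt h one_pos)
            push_neg at this
            have hk' : k - 1 + 1 = k := Nat.succ_pred_eq_of_pos h
            rwa [hk'] at this
        have hNpos : 0 < N := by
          by_contra h
          push_neg at h
          interval_cases N
          simp at hMN
          linarith
        have hkN : k < N := by
          have : k ≤ N - 1 := Nat.find_le (by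
            have : N - 1 + 1 = N := Nat.succ_pred_eq_of_pos hNpos
            rw [this]; exact h2)
          omega
        exact Set.mem_biUnion (Finset.mem_range.mpr hkN) ⟨hy, hk2, hk1⟩
      · exact Set.iUnion₂_subset fun k _ => hfsub k
    have hdisj : (↑(Finset.range N) : Set ℕ).PairwiseDisjoint f := by
      have hd : ∀ k l : ℕ, k < l → Disjoint (f k) (f l) := by
        intro k l hkl
        rw [Set.disjoint_left]
        rintro y ⟨_, _, hy2⟩ ⟨_, hy3, _⟩
        have : c * (1 + ε) ^ (k + 1) ≤ c * (1 + ε) ^ l := by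
          apply mul_le_mul_of_nonneg_left _ (le_of_lt hc)
          exact pow_le_pow_right₀ (by linarith) hkl
        linarith
      intro k _ l _ hkl
      rcases lt_or_gt_of_ne hkl with h | h
      · exact hd k l h
      · exact (hd l k h).symm
    -- images
    have himeq : ∀ k, inv0 r '' f k = inv0 r ⁻¹' f k :=
      fun k => image_inv0_eq_preimage hr (hf0 k)
    have him : ∀ k, MeasurableSet (inv0 r '' f k) := by
      intro k; rw [himeq k]; exact (hfm k).preimage (measurable_inv0' r)
    have himdisj : (↑(Finset.range N) : Set ℕ).PairwiseDisjoint fun k => inv0 r '' f k := by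
      intro k hk l hl hkl
      have := hdisj hk hl hkl
      simp only [Function.onFun, himeq] at this ⊢
      exact Disjoint.preimage _ this
    -- decomposition of F and G as finite sums
    have hFsum : μH[1] (inv0 r '' A) = ∑ k ∈ Finset.range N, μH[1] (inv0 r '' f k) := by
      have : inv0 r '' A = ⋃ k ∈ Finset.range N, inv0 r '' f k := by
        rw [hcover, Set.image_iUnion₂]
      rw [this]
      exact measure_biUnion_finset himdisj (fun k _ => him k)
    have hGsum : G = ∑ k ∈ Finset.range N,
        ∫⁻ y in f k, ENNReal.ofReal (r ^ 2 / ‖y‖ ^ 2) ∂μH[1] := by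
      rw [hGdef]
      conv_lhs => rw [hcover]
      exact lintegral_biUnion_finset hdisj (fun k _ => hfm k) _
    -- per-piece bounds
    have hab : ∀ k : ℕ, (0:ℝ) < c * (1 + ε) ^ k := fun k => by positivity
    have hFk : ∀ k, μH[1] (inv0 r '' f k)
        ≤ ENNReal.ofReal (r ^ 2 / (c * (1 + ε) ^ k) ^ 2) * μH[1] (f k) :=
      fun k => shell_ub hr (hab k) (hflb k)
    have hmuk : ∀ k, μH[1] (f k)
        ≤ ENNReal.ofReal ((c * (1 + ε) ^ (k + 1)) ^ 2 / r ^ 2) * μH[1] (inv0 r '' f k) :=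
      fun k => shell_lb hr (hab k) (hab (k+1)) (hflb k) (hfub k)
    have hGk_ub : ∀ k, (∫⁻ y in f k, ENNReal.ofReal (r ^ 2 / ‖y‖ ^ 2) ∂μH[1])
        ≤ ENNReal.ofReal (r ^ 2 / (c * (1 + ε) ^ k) ^ 2) * μH[1] (f k) := by
      intro k
      calc (∫⁻ y in f k, ENNReal.ofReal (r ^ 2 / ‖y‖ ^ 2) ∂μH[1])
          ≤ ∫⁻ _ in f k, ENNReal.ofReal (r ^ 2 / (c * (1 + ε) ^ k) ^ 2) ∂μH[1] := by
            apply setLIntegral_mono measurable_const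
            intro y hy
            apply ENNReal.ofReal_le_ofReal
            have h1 := hflb k y hy
            exact div_le_div_of_nonneg_left (by positivity) (by positivity) (by nlinarith [hab k])
        _ = _ := setLIntegral_const _ _
    have hGk_lb : ∀ k, ENNReal.ofReal (r ^ 2 / (c * (1 + ε) ^ (k + 1)) ^ 2) * μH[1] (f k)
        ≤ ∫⁻ y in f k, ENNReal.ofReal (r ^ 2 / ‖y‖ ^ 2) ∂μH[1] := by
      intro k
      rw [← setLIntegral_const (f k) _]
      apply setLIntegral_mono' (hfm k)
      intro y hy
      apply ENNReal.ofReal_le_ofReal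
      have h1 := hfub k y hy
      have h2 : (0:ℝ) < ‖y‖ := norm_pos_iff.mpr (hf0 k y hy)
      exact div_le_div_of_nonneg_left (by positivity) (by positivity) (by nlinarith [hab (k+1)])
    -- ratio identity
    have hratio : ∀ k : ℕ, r ^ 2 / (c * (1 + ε) ^ k) ^ 2
        = (1 + ε) ^ 2 * (r ^ 2 / (c * (1 + ε) ^ (k + 1)) ^ 2) := by
      intro k
      have h1 : (0:ℝ) < c * (1 + ε) ^ k := hab k
      have h2 : (0:ℝ) < c * (1 + ε) ^ (k + 1) := hab (k+1)
      rw [pow_succ]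
      field_simp
      ring
    have hratio2 : ∀ k : ℕ, (r ^ 2 / (c * (1 + ε) ^ k) ^ 2)
        * ((c * (1 + ε) ^ (k + 1)) ^ 2 / r ^ 2) = (1 + ε) ^ 2 := by
      intro k
      have h1 : (0:ℝ) < c * (1 + ε) ^ k := hab k
      have h2 : (0:ℝ) < c * (1 + ε) ^ (k + 1) := hab (k+1)
      have hr2 : (0:ℝ) < r ^ 2 := by positivity
      rw [pow_succ]
      field_simp
      ring
    constructor
    · rw [hFsum, hGsum, Finset.mul_sum]
      apply Finset.sum_le_sum
      intro k _
      calc μH[1] (inv0 r '' f k)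
          ≤ ENNReal.ofReal (r ^ 2 / (c * (1 + ε) ^ k) ^ 2) * μH[1] (f k) := hFk k
        _ = ENNReal.ofReal ((1 + ε) ^ 2)
            * (ENNReal.ofReal (r ^ 2 / (c * (1 + ε) ^ (k + 1)) ^ 2) * μH[1] (f k)) := by
            rw [← mul_assoc, ← ENNReal.ofReal_mul (by positivity), ← hratio k]
        _ ≤ ENNReal.ofReal ((1 + ε) ^ 2)
            * ∫⁻ y in f k, ENNReal.ofReal (r ^ 2 / ‖y‖ ^ 2) ∂μH[1] := by
            exact mul_le_mul_right (hGk_lb k) _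
    · rw [hFsum, hGsum, Finset.mul_sum]
      apply Finset.sum_le_sum
      intro k _
      calc (∫⁻ y in f k, ENNReal.ofReal (r ^ 2 / ‖y‖ ^ 2) ∂μH[1])
          ≤ ENNReal.ofReal (r ^ 2 / (c * (1 + ε) ^ k) ^ 2) * μH[1] (f k) := hGk_ub k
        _ ≤ ENNReal.ofReal (r ^ 2 / (c * (1 + ε) ^ k) ^ 2)
            * (ENNReal.ofReal ((c * (1 + ε) ^ (k + 1)) ^ 2 / r ^ 2)
              * μH[1] (inv0 r '' f k)) := mul_le_mul_right (hmuk k) _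
        _ = ENNReal.ofReal ((1 + ε) ^ 2) * μH[1] (inv0 r '' f k) := by
            rw [← mul_assoc, ← ENNReal.ofReal_mul (by positivity), hratio2 k]
  exact ennreal_squeeze hGfin (fun ε hε => (main ε hε).1) (fun ε hε => (main ε hε).2)

lemma restrict_image_eq {r c M : ℝ} (hr : 0 < r) (hc : 0 < c) {S : Set E}
    (hSm : MeasurableSet S) (hfinS : μH[1] S ≠ ⊤)
    (hlb : ∀ y ∈ S, c ≤ ‖y‖) (hub : ∀ y ∈ S, ‖y‖ ≤ M) :
    μH[1].restrict (inv0 r '' S) =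
      Measure.map (inv0 r)
        ((μH[1].restrict S).withDensity fun y => ENNReal.ofReal (r ^ 2 / ‖y‖ ^ 2)) := by
  ext B hB
  rw [Measure.restrict_apply hB, Measure.map_apply (measurable_inv0' r) hB,
    withDensity_apply _ ((measurable_inv0' r) hB), Measure.restrict_restrict
      ((measurable_inv0' r) hB)]
  have hAm : MeasurableSet (inv0 r ⁻¹' B ∩ S) :=
    ((measurable_inv0' r) hB).inter hSm
  have hsub : inv0 r ⁻¹' B ∩ S ⊆ S := Set.inter_subset_right
  have h := key (M := M) hr hc hAm
    (ne_top_of_le_ne_top hfinS (measure_mono hsub))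
    (fun y hy => hlb y (hsub hy)) (fun y hy => hub y (hsub hy))
  rw [← h]
  congr 1
  ext z
  constructor
  · rintro ⟨hzB, y, hyS, rfl⟩
    exact ⟨y, ⟨hzB, hyS⟩, rfl⟩
  · rintro ⟨y, ⟨hyB, hyS⟩, rfl⟩
    exact ⟨hyB, y, hyS, rfl⟩


end Meas
end NPInv
end

open NPInv in
/-- Lemma 3.1(ii), `d = 2`: transformation of the Neumann–Poincaré operator under
inversion in a sphere centered at an exterior point `0 ∉ closure Ω`:
`K*_{∂Ω*}[φ*](Tx) = (|x|²/r²) K*_{∂Ω}[φ](x) − (∫_{∂Ω} φ dσ)(x·ν_x)/(2πr²)`,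
with `∇Γ(z) = z/(2π|z|²)`, `φ*(Ty) = φ(y)|y|²/r²`, and `ν*(Tx) = R_x ν(x)`. -/
theorem np_inversion_exterior_dim2
    (r : ℝ) (hr : 0 < r) (Ω : Set (EuclideanSpace ℝ (Fin 2)))
    (hopen : IsOpen Ω) (hbd : Bornology.IsBounded Ω)
    (h0 : (0 : EuclideanSpace ℝ (Fin 2)) ∉ closure Ω)
    (T : EuclideanSpace ℝ (Fin 2) → EuclideanSpace ℝ (Fin 2))
    (hT : ∀ x : EuclideanSpace ℝ (Fin 2), x ≠ 0 → T x = (r ^ 2 / ‖x‖ ^ 2) • x)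
    (σ σs : Measure (EuclideanSpace ℝ (Fin 2)))
    (hσ : σ = μH[1].restrict (frontier Ω))
    (hσs : σs = μH[1].restrict (T '' frontier Ω))
    (hfin : σ (frontier Ω) < ⊤)
    (R : EuclideanSpace ℝ (Fin 2) → EuclideanSpace ℝ (Fin 2) → EuclideanSpace ℝ (Fin 2))
    (hR : ∀ x v : EuclideanSpace ℝ (Fin 2), x ≠ 0 →
      R x v = v - (2 * ⟪x, v⟫ / ‖x‖ ^ 2) • x)
    (ν νs : EuclideanSpace ℝ (Fin 2) → EuclideanSpace ℝ (Fin 2))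
    (hνs : ∀ x ∈ frontier Ω, νs (T x) = R x (ν x))
    (φ : EuclideanSpace ℝ (Fin 2) → ℝ) (hφmeas : Measurable φ)
    (hφbdd : ∃ C, ∀ y, |φ y| ≤ C)
    (φs : EuclideanSpace ℝ (Fin 2) → ℝ)
    (hφs : ∀ y ∈ frontier Ω, φs (T y) = φ y * ‖y‖ ^ 2 / r ^ 2)
    (x : EuclideanSpace ℝ (Fin 2)) (hxΩ : x ∈ frontier Ω)
    (hint : Integrable
      (fun y => ⟪ν x, (2 * π * ‖x - y‖ ^ 2)⁻¹ • (x - y)⟫ * φ y) σ) :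
    ∫ z, ⟪νs (T x), (2 * π * ‖T x - z‖ ^ 2)⁻¹ • (T x - z)⟫ * φs z ∂σs =
      (‖x‖ ^ 2 / r ^ 2) *
          ∫ y, ⟪ν x, (2 * π * ‖x - y‖ ^ 2)⁻¹ • (x - y)⟫ * φ y ∂σ
        - (∫ y, φ y ∂σ) * (⟪x, ν x⟫ / (2 * π * r ^ 2)) := by
  subst hσ hσs
  have hSm : MeasurableSet (frontier Ω) := isClosed_frontier.measurableSet
  have hS0 : ∀ y ∈ frontier Ω, y ≠ 0 := by
    intro y hy h
    exact h0 (h ▸ frontier_subset_closure hy)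
  have hx0 : x ≠ 0 := hS0 x hxΩ
  -- lower bound on the norm over the frontier
  obtain ⟨c, hc, hball⟩ := Metric.isOpen_iff.mp isClosed_closure.isOpen_compl 0 h0
  have hlb : ∀ y ∈ frontier Ω, c ≤ ‖y‖ := by
    intro y hy
    by_contra h
    push_neg at h
    have : y ∈ Metric.ball (0 : EuclideanSpace ℝ (Fin 2)) c := by
      simpa [Metric.mem_ball, dist_zero_right] using h
    exact hball this (frontier_subset_closure hy)
  -- upper bound
  obtain ⟨M, hM⟩ := hbd.closure.exists_norm_le
  have hub : ∀ y ∈ frontier Ω, ‖y‖ ≤ M := fun y hy => hM y (frontier_subset_closure hy)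
  -- finiteness
  rw [Measure.restrict_apply hSm, Set.inter_self] at hfin
  have hfinS : μH[1] (frontier Ω) ≠ ⊤ := hfin.ne
  -- the image of the frontier
  have himS : T '' frontier Ω = inv0 r '' frontier Ω :=
    Set.image_congr fun y hy => hT y (hS0 y hy)
  have himm : MeasurableSet (inv0 r '' frontier Ω) := by
    rw [image_inv0_eq_preimage hr hS0]
    exact hSm.preimage (measurable_inv0' r)
  have hTx : T x = inv0 r x := hT x hx0
  rw [hνs x hxΩ, hR x (ν x) hx0, hTx, himS]
  -- replace `φs` by a measurable representative on the image
  have hstep1 :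
      ∫ z, ⟪ν x - (2 * ⟪x, ν x⟫ / ‖x‖ ^ 2) • x,
          (2 * π * ‖inv0 r x - z‖ ^ 2)⁻¹ • (inv0 r x - z)⟫ * φs z
        ∂(μH[1].restrict (inv0 r '' frontier Ω)) =
      ∫ z, ⟪ν x - (2 * ⟪x, ν x⟫ / ‖x‖ ^ 2) • x,
          (2 * π * ‖inv0 r x - z‖ ^ 2)⁻¹ • (inv0 r x - z)⟫
        * (φ (inv0 r z) * ‖inv0 r z‖ ^ 2 / r ^ 2)
        ∂(μH[1].restrict (inv0 r '' frontier Ω)) := by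
    apply setIntegral_congr_fun himm
    rintro z ⟨y, hy, rfl⟩
    have hy0 : y ≠ 0 := hS0 y hy
    have h1 : inv0 r y = T y := (hT y hy0).symm
    simp only [inv0_inv0 hr hy0]
    rw [h1, hφs y hy]
  rw [hstep1, restrict_image_eq hr hc hSm hfinS hlb hub]
  -- measurability of the new integrand
  have hg'm : Measurable fun z : EuclideanSpace ℝ (Fin 2) =>
      ⟪ν x - (2 * ⟪x, ν x⟫ / ‖x‖ ^ 2) • x,
          (2 * π * ‖inv0 r x - z‖ ^ 2)⁻¹ • (inv0 r x - z)⟫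
        * (φ (inv0 r z) * ‖inv0 r z‖ ^ 2 / r ^ 2) := by
    apply Measurable.mul
    · apply Measurable.inner measurable_const
      exact ((((measurable_const.sub measurable_id).norm.pow_const 2).const_mul
        (2 * π)).inv).smul (measurable_const.sub measurable_id)
    · exact ((hφmeas.comp (measurable_inv0' r)).mul
        ((measurable_inv0' r).norm.pow_const 2)).div_const _
  rw [integral_map (measurable_inv0' r).aemeasurable hg'm.aestronglyMeasurable]
  rw [show (fun y : EuclideanSpace ℝ (Fin 2) => ENNReal.ofReal (r ^ 2 / ‖y‖ ^ 2))
      = (fun y : EuclideanSpace ℝ (Fin 2) => ((Real.toNNReal (r ^ 2 / ‖y‖ ^ 2) : ℝ≥0) : ℝ≥0∞)) from rfl]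
  rw [integral_withDensity_eq_integral_smul
    (show Measurable fun y : EuclideanSpace ℝ (Fin 2) => Real.toNNReal (r ^ 2 / ‖y‖ ^ 2) from
      (measurable_const.div (measurable_norm.pow_const 2)).real_toNNReal) _]
  -- a.e. pointwise identity
  haveI : NullSingletonClass (μH[1] : Measure (EuclideanSpace ℝ (Fin 2))) :=
    MeasureTheory.Measure.noAtoms_hausdorff (EuclideanSpace ℝ (Fin 2)) one_pos
  have hxnull : (μH[1].restrict (frontier Ω) : Measure (EuclideanSpace ℝ (Fin 2))) {x} = 0 := by
    rw [Measure.restrict_apply (measurableSet_singleton x)]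
    exact le_antisymm
      (le_trans (measure_mono Set.inter_subset_left) (measure_singleton x).le) zero_le
  have hae : ∀ᵐ y ∂(μH[1].restrict (frontier Ω) : Measure (EuclideanSpace ℝ (Fin 2))),
      y ∈ frontier Ω ∧ y ≠ x := by
    refine (ae_restrict_mem hSm).and ?_
    rw [ae_iff]
    convert hxnull using 2
    ext y
    simp
  have hstep2 : (fun y : EuclideanSpace ℝ (Fin 2) => Real.toNNReal (r ^ 2 / ‖y‖ ^ 2) •
        (⟪ν x - (2 * ⟪x, ν x⟫ / ‖x‖ ^ 2) • x,
          (2 * π * ‖inv0 r x - inv0 r y‖ ^ 2)⁻¹ • (inv0 r x - inv0 r y)⟫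
        * (φ (inv0 r (inv0 r y)) * ‖inv0 r (inv0 r y)‖ ^ 2 / r ^ 2)))
      =ᵐ[(μH[1].restrict (frontier Ω) : Measure (EuclideanSpace ℝ (Fin 2)))]
      fun y => ‖x‖ ^ 2 / r ^ 2 * (⟪ν x, (2 * π * ‖x - y‖ ^ 2)⁻¹ • (x - y)⟫ * φ y)
        - φ y * (⟪x, ν x⟫ / (2 * π * r ^ 2)) := by
    refine hae.mono fun y hy => ?_
    obtain ⟨hyS, hyx⟩ := hy
    have hy0 : y ≠ 0 := hS0 y hyS
    have hp := pointwise hr x y (ν x) hx0 hy0 (Ne.symm hyx) (φ y)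
    simp only [inv0_inv0 hr hy0, NNReal.smul_def,
      Real.coe_toNNReal _ (by positivity : (0:ℝ) ≤ r ^ 2 / ‖y‖ ^ 2), smul_eq_mul]
    linear_combination hp
  rw [integral_congr_ae hstep2]
  -- split the integral
  haveI : IsFiniteMeasure (μH[1].restrict (frontier Ω) : Measure (EuclideanSpace ℝ (Fin 2))) :=
    ⟨by rw [Measure.restrict_apply_univ]; exact hfin⟩
  obtain ⟨C, hC⟩ := hφbdd
  have hφint : Integrable φ (μH[1].restrict (frontier Ω) : Measure (EuclideanSpace ℝ (Fin 2))) := by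
    refine Integrable.mono' (integrable_const C) hφmeas.aestronglyMeasurable ?_
    exact Filter.Eventually.of_forall fun y => by simpa using hC y
  rw [integral_sub (hint.const_mul _) (hφint.mul_const _), integral_const_mul,
    integral_mul_const]
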